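/- For a fixed x ∈ (0,1), the function a ↦ (1 + a·x)^(1/a) is decreasing on (1,∞). -/

import Mathlib

theorem stmt_3 (x : ℝ) (hx : x ∈ Set.Ioo (0:ℝ) 1) :
    AntitoneOn (fun a : ℝ => (1 + a * x) ^ (1 / a)) (Set.Ioi 1) := by
  obtain ⟨hx0, hx1⟩ := hx
  have hpos : ∀ a : ℝ, a ∈ Set.Ioi (1:ℝ) → (0:ℝ) < 1 + a * x := by
    intro a ha
    have : 0 < a * x := mul_pos (lt_trans one_pos ha) hx0
    linarith
  have hd : ∀ a ∈ Set.Ioi (1:ℝ), HasDerivAt (fun a : ℝ => Real.log (1 + a * x) / a)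
      ((x / (1 + a * x) * a - Real.log (1 + a * x) * 1) / a ^ 2) a := by
    intro a ha
    have ha0 : a ≠ 0 := ne_of_gt (lt_trans one_pos ha)
    have h1 : HasDerivAt (fun a : ℝ => 1 + a * x) x a := by
      simpa using ((hasDerivAt_id a).mul_const x).const_add 1
    have h2 : HasDerivAt (fun a : ℝ => Real.log (1 + a * x)) (x / (1 + a * x)) a := by
      simpa [div_eq_mul_inv, mul_comm, Function.comp_def] using (Real.hasDerivAt_log (ne_of_gt (hpos a ha))).comp a h1
    exact h2.div (hasDerivAt_id a) ha0
  have key : AntitoneOn (fun a : ℝ => Real.log (1 + a * x) / a) (Set.Ioi 1) := by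
    have hconv : Convex ℝ (Set.Ioi (1:ℝ)) := convex_Ioi 1
    have hint : interior (Set.Ioi (1:ℝ)) = Set.Ioi 1 := interior_Ioi
    apply antitoneOn_of_deriv_nonpos hconv
    · exact fun a ha => ((hd a ha).continuousAt.continuousWithinAt)
    · rw [hint]
      exact fun a ha => ((hd a ha).differentiableAt.differentiableWithinAt)
    · rw [hint]
      intro a ha
      rw [(hd a ha).deriv]
      have ha1 : (1:ℝ) < a := ha
      have hu : (1:ℝ) < 1 + a * x := by
        have : 0 < a * x := mul_pos (lt_trans one_pos ha1) hx0
        linarith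
      have hlog : (1 + a * x - 1) / (1 + a * x) < Real.log (1 + a * x) := by
        have hu0 : (0:ℝ) < 1 + a * x := by linarith
        have hne : (1 + a * x)⁻¹ ≠ 1 := by
          simp only [ne_eq, inv_eq_one]; intro h; linarith
        have := Real.log_lt_sub_one_of_pos (inv_pos.2 hu0) hne
        rw [Real.log_inv] at this
        have h2 : 1 - (1 + a * x)⁻¹ < Real.log (1 + a * x) := by linarith
        calc (1 + a * x - 1) / (1 + a * x) = 1 - (1 + a * x)⁻¹ := by
              field_simp
          _ < Real.log (1 + a * x) := h2
      have hnum : x / (1 + a * x) * a - Real.log (1 + a * x) * 1 ≤ 0 := by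
        have h3 : x / (1 + a * x) * a = (1 + a * x - 1) / (1 + a * x) := by
          field_simp; ring
        rw [h3, mul_one]
        linarith
      have hsq : (0:ℝ) < a ^ 2 := by positivity
      exact div_nonpos_of_nonpos_of_nonneg hnum hsq.le
  intro a ha b hb hab
  have hpa := hpos a ha
  have hpb := hpos b hb
  simp only
  rw [Real.rpow_def_of_pos hpa, Real.rpow_def_of_pos hpb]
  apply Real.exp_le_exp.2
  have := key ha hb hab
  simpa [mul_one_div, div_eq_mul_inv] using this
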